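/- (Theorem 3.7(i), convergence with merely positive P). Let H be a finite-dimensional real inner product space, let P be a self-adjoint bounded linear operator with ⟨P x, x⟩ ≥ 0 for all x (positive but not necessarily strongly positive), let M be a bounded linear operator with M* = −M, and set H₀ = P + M. Let A : H → Set H be maximally monotone, T z = {u + M z : u ∈ A z}, and assume zer T = {z : 0 ∈ T z} ≠ ∅. Suppose G : H → H is a continuous map such that for every z ∈ H, P z − P(G z) − M(G z) ∈ A(G z), and it is the unique such point (i.e. G = (H₀ + A)⁻¹ P is single-valued, full-domain, and continuous). Given z₀ and scalars λ_n with ε ≤ λ_n ≤ 2 − ε for all n and some ε > 0, define z̄_n = G(z_n) and z_{n+1} = z_n + λ_n(z̄_n − z_n). Then (z_n) converges to a point in zer T. -/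

import Mathlib

open scoped InnerProductSpace
open Filter Topology

lemma aux_contraction (b c : ℕ → ℝ) (q : ℝ) (hq0 : 0 ≤ q) (hq1 : q < 1)
    (hb : ∀ n, 0 ≤ b n) (hrec : ∀ n, b (n+1) ≤ q * b n + c n)
    (hc : Tendsto c atTop (𝓝 0)) :
    Tendsto b atTop (𝓝 0) := by
  rw [Metric.tendsto_atTop]
  intro δ hδ
  have hδ2 : 0 < δ/2 * (1 - q) := by nlinarith
  rw [Metric.tendsto_atTop] at hc
  obtain ⟨N, hN⟩ := hc (δ/2 * (1-q)) hδ2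
  have key : ∀ m, b (N + m) ≤ q ^ m * b N + δ/2 := by
    intro m
    induction m with
    | zero => simp; linarith [hb N]
    | succ m ih =>
      have h1 := hrec (N + m)
      have h2 := hN (N + m) (Nat.le_add_right N m)
      rw [Real.dist_eq, sub_zero] at h2
      have h3 : c (N + m) ≤ δ/2 * (1-q) := le_of_abs_le h2.le
      have h4 : q * b (N+m) ≤ q * (q ^ m * b N + δ/2) :=
        mul_le_mul_of_nonneg_left ih hq0
      have heq : N + (m+1) = (N + m) + 1 := by ring_nf
      rw [heq]
      calc b ((N+m)+1) ≤ q * b (N+m) + c (N+m) := h1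
        _ ≤ q * (q ^ m * b N + δ/2) + δ/2 * (1-q) := by linarith
        _ = q ^ (m+1) * b N + δ/2 := by ring
  have hpow : Tendsto (fun m => q ^ m * b N) atTop (𝓝 0) := by
    simpa using (tendsto_pow_atTop_nhds_zero_of_lt_one hq0 hq1).mul_const (b N)
  rw [Metric.tendsto_atTop] at hpow
  obtain ⟨m₀, hm₀⟩ := hpow (δ/4) (by linarith)
  refine ⟨N + m₀, fun n hn => ?_⟩
  have hble : b n ≤ q ^ (n - N) * b N + δ/2 := by
    have := key (n - N)
    rwa [Nat.add_sub_cancel' (le_trans (Nat.le_add_right N m₀) hn)] at this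
  have hqm : q ^ (n - N) * b N ≤ q ^ m₀ * b N :=
    mul_le_mul_of_nonneg_right (pow_le_pow_of_le_one hq0 hq1.le (by omega)) (hb N)
  have h5 := hm₀ m₀ le_rfl
  rw [Real.dist_eq, sub_zero] at h5
  have h6 : q ^ m₀ * b N ≤ δ/4 := le_of_abs_le h5.le
  rw [Real.dist_eq, sub_zero, abs_of_nonneg (hb n)]
  linarith

lemma aux_antitone_sub (r : ℕ → ℝ) (hr : Antitone r) (h0 : ∀ n, 0 ≤ r n)
    (φ : ℕ → ℕ) (hφ : StrictMono φ) (hsub : Tendsto (r ∘ φ) atTop (𝓝 0)) :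
    Tendsto r atTop (𝓝 0) := by
  have hbdd : BddBelow (Set.range r) := ⟨0, fun x ⟨n, hn⟩ => hn ▸ h0 n⟩
  have hL := tendsto_atTop_ciInf hr hbdd
  have hL2 : Tendsto (r ∘ φ) atTop (𝓝 (⨅ i, r i)) := hL.comp hφ.tendsto_atTop
  have : (⨅ i, r i) = 0 := tendsto_nhds_unique hL2 hsub
  rwa [this] at hL

lemma aux_antitone_lim (r : ℕ → ℝ) (hr : Antitone r) (h0 : ∀ n, 0 ≤ r n) :
    Tendsto (fun n => r n - r (n+1)) atTop (𝓝 0) := by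
  have hbdd : BddBelow (Set.range r) := ⟨0, fun x ⟨n, hn⟩ => hn ▸ h0 n⟩
  have hL := tendsto_atTop_ciInf hr hbdd
  have hL2 : Tendsto (fun n => r (n+1)) atTop (𝓝 (⨅ i, r i)) :=
    hL.comp (tendsto_add_atTop_nat 1)
  simpa using hL.sub hL2

section AuxP
variable {H : Type*} [NormedAddCommGroup H] [InnerProductSpace ℝ H] [FiniteDimensional ℝ H]

omit [FiniteDimensional ℝ H] in
lemma aux_psd_kernel (P : H →L[ℝ] H) (hPsym : ∀ x y, ⟪P x, y⟫_ℝ = ⟪x, P y⟫_ℝ)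
    (hPpos : ∀ x, (0:ℝ) ≤ ⟪P x, x⟫_ℝ) (v : H) (hv : ⟪P v, v⟫_ℝ = 0) : P v = 0 := by
  have key : ∀ t : ℝ, 0 ≤ 2 * t * ⟪P v, P v⟫_ℝ + t^2 * ⟪P (P v), P v⟫_ℝ := by
    intro t
    have h := hPpos (v + t • P v)
    have expand : ⟪P (v + t • P v), v + t • P v⟫_ℝ
        = ⟪P v, v⟫_ℝ + t * ⟪P v, P v⟫_ℝ + t * ⟪P (P v), v⟫_ℝ + t^2 * ⟪P (P v), P v⟫_ℝ := by
      simp [map_add, map_smul, inner_add_left, inner_add_right,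
        inner_smul_left, inner_smul_right]
      ring
    have hsw : ⟪P (P v), v⟫_ℝ = ⟪P v, P v⟫_ℝ := by
      rw [hPsym (P v) v, real_inner_comm]
    rw [expand, hsw, hv] at h
    linarith
  have a := real_inner_self_nonneg (x := P v)
  set s : ℝ := ⟪P v, P v⟫_ℝ with hs
  set b : ℝ := ⟪P (P v), P v⟫_ℝ with hb
  have hb0 : 0 ≤ b := hPpos (P v)
  have hs0 : s ≤ 0 := by
    rcases eq_or_lt_of_le hb0 with hb' | hb'
    · have := key (-1); nlinarith
    · have h := key (-s/b)
      have heq : 2 * (-s/b) * s + (-s/b)^2 * b = -s^2/b := by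
        field_simp; ring
      rw [heq] at h
      have h2 := mul_nonneg h hb'.le
      rw [div_mul_cancel₀ _ hb'.ne'] at h2
      nlinarith [sq_nonneg s]
  have : s = 0 := le_antisymm hs0 a
  exact inner_self_eq_zero.mp this

lemma aux_coercive (P : H →L[ℝ] H) (hPsym : ∀ x y, ⟪P x, y⟫_ℝ = ⟪x, P y⟫_ℝ)
    (hPpos : ∀ x, (0:ℝ) ≤ ⟪P x, x⟫_ℝ) :
    ∃ c > (0:ℝ), ∀ v ∈ (LinearMap.ker (P : H →ₗ[ℝ] H) : Submodule ℝ H)ᗮ, c * ‖v‖^2 ≤ ⟪P v, v⟫_ℝ := by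
  set K : Submodule ℝ H := LinearMap.ker (P : H →ₗ[ℝ] H) with hK
  have hpd : ∀ v ∈ Kᗮ, v ≠ 0 → 0 < ⟪P v, v⟫_ℝ := by
    intro v hv hvne
    rcases (hPpos v).lt_or_eq with h | h
    · exact h
    · exfalso
      have hker : P v = 0 := aux_psd_kernel P hPsym hPpos v h.symm
      have hvK : v ∈ K := by rwa [hK, LinearMap.mem_ker]
      have := (Submodule.mem_orthogonal K v).mp hv v hvK
      exact hvne (inner_self_eq_zero.mp this)
  set S : Set ↥Kᗮ := Metric.sphere 0 1 with hS
  by_cases hne : S.Nonempty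
  · have hcpt : IsCompact S := isCompact_sphere 0 1
    have hcont : ContinuousOn (fun v : ↥Kᗮ => ⟪P (v : H), (v : H)⟫_ℝ) S := by
      apply Continuous.continuousOn
      exact (P.continuous.comp continuous_subtype_val).inner continuous_subtype_val
    obtain ⟨v₀, hv₀S, hv₀min⟩ := hcpt.exists_isMinOn hne hcont
    set c : ℝ := ⟪P (v₀ : H), (v₀ : H)⟫_ℝ with hc
    have hv₀ne : (v₀ : H) ≠ 0 := by
      intro h
      have : ‖(v₀ : H)‖ = 1 := by
        have := mem_sphere_zero_iff_norm.mp hv₀S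
        simpa using this
      rw [h] at this; simp at this
    have hcpos : 0 < c := hpd _ v₀.2 hv₀ne
    refine ⟨c, hcpos, fun v hv => ?_⟩
    rcases eq_or_ne v 0 with rfl | hvne
    · simp
    · have hnv : 0 < ‖v‖ := norm_pos_iff.mpr hvne
      set u : ↥Kᗮ := (‖v‖⁻¹ : ℝ) • ⟨v, hv⟩ with hu
      have huS : u ∈ S := by
        rw [hS, mem_sphere_zero_iff_norm]
        have : ‖u‖ = ‖v‖⁻¹ * ‖v‖ := by
          rw [hu, norm_smul]
          simp only [Real.norm_eq_abs, abs_of_pos (inv_pos.mpr hnv)]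
          congr 1
        rw [this, inv_mul_cancel₀ hnv.ne']
      have hmin := hv₀min huS
      simp only [Set.mem_setOf_eq] at hmin
      have hval : ⟪P ((u : H)), (u : H)⟫_ℝ = ‖v‖⁻¹^2 * ⟪P v, v⟫_ℝ := by
        have : (u : H) = (‖v‖⁻¹ : ℝ) • v := rfl
        rw [this, map_smul, inner_smul_left, inner_smul_right]
        simp; ring
      rw [hval] at hmin
      rw [← hc] at hmin
      have h2 : c * ‖v‖^2 ≤ ‖v‖⁻¹^2 * ⟪P v, v⟫_ℝ * ‖v‖^2 := by
        nlinarith [sq_nonneg ‖v‖]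
      calc c * ‖v‖^2 ≤ ‖v‖⁻¹^2 * ⟪P v, v⟫_ℝ * ‖v‖^2 := h2
        _ = ⟪P v, v⟫_ℝ := by
          field_simp
  · refine ⟨1, one_pos, fun v hv => ?_⟩
    have : v = 0 := by
      by_contra hvne
      have hnv : 0 < ‖v‖ := norm_pos_iff.mpr hvne
      apply hne
      refine ⟨(‖v‖⁻¹ : ℝ) • ⟨v, hv⟩, ?_⟩
      rw [hS, mem_sphere_zero_iff_norm]
      have : ‖((‖v‖⁻¹ : ℝ) • (⟨v, hv⟩ : ↥Kᗮ))‖ = ‖v‖⁻¹ * ‖v‖ := by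
        rw [norm_smul]
        simp only [Real.norm_eq_abs, abs_of_pos (inv_pos.mpr hnv)]
        congr 1
      rw [this, inv_mul_cancel₀ hnv.ne']
    simp [this]

end AuxP


lemma aux_sq_to_zero {H : Type*} [NormedAddCommGroup H]
    (f : ℕ → H) (g : ℕ → ℝ) (hg : Tendsto g atTop (𝓝 0))
    (hbound : ∀ n, ‖f n‖^2 ≤ g n) : Tendsto f atTop (𝓝 0) := by
  have hnorm2 : Tendsto (fun n => ‖f n‖^2) atTop (𝓝 0) :=
    tendsto_of_tendsto_of_tendsto_of_le_of_le tendsto_const_nhds hg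
      (fun n => sq_nonneg _) hbound
  have hsq : Tendsto (fun n => Real.sqrt (‖f n‖^2)) atTop (𝓝 (Real.sqrt 0)) :=
    (Real.continuous_sqrt.tendsto 0).comp hnorm2
  have : Tendsto (fun n => ‖f n‖) atTop (𝓝 0) := by
    simpa [Real.sqrt_sq (norm_nonneg _)] using hsq
  exact tendsto_zero_iff_norm_tendsto_zero.mpr this

/-- A set-valued operator is monotone. -/
def IsMonotoneSet {H : Type*} [NormedAddCommGroup H] [InnerProductSpace ℝ H]
    (A : H → Set H) : Prop :=
  ∀ x y u v, u ∈ A x → v ∈ A y → (0:ℝ) ≤ ⟪x - y, u - v⟫_ℝ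

/-- A set-valued operator is maximally monotone. -/
def IsMaxMonotone {H : Type*} [NormedAddCommGroup H] [InnerProductSpace ℝ H]
    (A : H → Set H) : Prop :=
  IsMonotoneSet A ∧ ∀ B : H → Set H, IsMonotoneSet B → (∀ x, A x ⊆ B x) → ∀ x, B x = A x

set_option maxHeartbeats 2000000 in
/-- Theorem 3.7(i): convergence of the relaxed preconditioned proximal iteration with a
merely positive (not necessarily strongly positive) self-adjoint `P` and skew-adjoint `M`. -/
theorem positive_P_convergence
    {H : Type*} [NormedAddCommGroup H] [InnerProductSpace ℝ H] [FiniteDimensional ℝ H]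
    (P : H →L[ℝ] H)
    (hPsym : ∀ x y, ⟪P x, y⟫_ℝ = ⟪x, P y⟫_ℝ)
    (hPpos : ∀ x, (0:ℝ) ≤ ⟪P x, x⟫_ℝ)
    (M : H →L[ℝ] H) (hMskew : ∀ x y, ⟪M x, y⟫_ℝ = - ⟪x, M y⟫_ℝ)
    (A : H → Set H) (hA : IsMaxMonotone A)
    (hzer : ∃ w, ∃ u ∈ A w, u + M w = 0)
    (G : H → H) (hGcont : Continuous G)
    (hGres : ∀ z, P z - P (G z) - M (G z) ∈ A (G z))
    (hGuniq : ∀ z w, P z - P w - M w ∈ A w → w = G z)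
    (z : ℕ → H) (lam : ℕ → ℝ) (ε : ℝ) (hε : 0 < ε)
    (hlam : ∀ n, ε ≤ lam n ∧ lam n ≤ 2 - ε)
    (hupd : ∀ n, z (n+1) = z n + lam n • (G (z n) - z n)) :
    ∃ zstar : H, (∃ u ∈ A zstar, u + M zstar = 0) ∧
      Filter.Tendsto z Filter.atTop (nhds zstar) := by
  haveI : CompleteSpace H := FiniteDimensional.complete ℝ H
  have hε1 : ε ≤ 1 := by have := hlam 0; linarith [this.1, this.2]
  -- basic facts
  have hMzero : ∀ x : H, ⟪x, M x⟫_ℝ = 0 := by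
    intro x
    have h1 := hMskew x x
    have h2 : ⟪M x, x⟫_ℝ = ⟪x, M x⟫_ℝ := real_inner_comm _ _
    linarith
  have hG_factor : ∀ a b : H, P a = P b → G a = G b := by
    intro a b hab
    have h := hGres a
    rw [hab] at h
    exact hGuniq b (G a) h
  -- the firm-nonexpansiveness-type inequality
  have hfirm : ∀ a b : H, ⟪G a - G b, P (G a - a) - P (G b - b)⟫_ℝ ≤ 0 := by
    intro a b
    have hmono := hA.1 (G a) (G b) _ _ (hGres a) (hGres b)
    have hexp : (P a - P (G a) - M (G a)) - (P b - P (G b) - M (G b))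
        = -(P (G a - a) - P (G b - b)) - M (G a - G b) := by
      simp only [map_sub]; abel
    rw [hexp] at hmono
    rw [inner_sub_right, inner_neg_right, hMzero] at hmono
    linarith
  -- fixed point from zer T
  obtain ⟨w, u, huA, huMw⟩ := hzer
  have hwfix : G w = w := by
    have hu : u = -M w := eq_neg_of_add_eq_zero_left huMw
    have hmem : P w - P w - M w ∈ A w := by
      have : P w - P w - M w = u := by rw [hu]; abel
      rw [this]; exact huA
    exact (hGuniq w w hmem).symm
  -- projection setup
  set K : Submodule ℝ H := LinearMap.ker (P : H →ₗ[ℝ] H) with hKdef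
  set Pi : H →L[ℝ] H := Kᗮ.subtypeL.comp (Kᗮ.orthogonalProjectionOnto) with hPidef
  have hmem : ∀ v : H, Pi v ∈ Kᗮ := fun v => (Kᗮ.orthogonalProjectionOnto v).2
  have hkerpart : ∀ v : H, v - Pi v ∈ K := by
    intro v
    have := Submodule.sub_starProjection_mem_orthogonal (K := Kᗮ) v
    rwa [Submodule.orthogonal_orthogonal] at this
  have hPx : ∀ v : H, P (Pi v) = P v := by
    intro v
    have h := hkerpart v
    rw [hKdef, LinearMap.mem_ker] at h
    have h2 : P v - P (Pi v) = 0 := by rw [← map_sub]; exact h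
    exact (sub_eq_zero.mp h2).symm
  have hPk : ∀ v : H, ∀ k ∈ K, ⟪P v, k⟫_ℝ = 0 := by
    intro v k hk
    rw [hKdef, LinearMap.mem_ker] at hk
    rw [hPsym, (show P k = 0 from hk), inner_zero_right]
  have hquad : ∀ v : H, ⟪P v, v⟫_ℝ = ⟪P (Pi v), Pi v⟫_ℝ := by
    intro v
    have hdec : v = Pi v + (v - Pi v) := by abel
    calc ⟪P v, v⟫_ℝ = ⟪P (Pi v), Pi v + (v - Pi v)⟫_ℝ := by rw [hPx]; exact congrArg _ hdec
      _ = ⟪P (Pi v), Pi v⟫_ℝ + ⟪P (Pi v), v - Pi v⟫_ℝ := inner_add_right _ _ _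
      _ = ⟪P (Pi v), Pi v⟫_ℝ := by rw [hPk _ _ (hkerpart v)]; ring
  obtain ⟨c, hcpos, hcb⟩ := aux_coercive P hPsym hPpos
  -- Fejér-type key inequality for any fixed point of G
  have hkey : ∀ (w' : H), G w' = w' → ∀ n,
      ⟪P (z (n+1) - w'), z (n+1) - w'⟫_ℝ + ε^2 * ⟪P (G (z n) - z n), G (z n) - z n⟫_ℝ
        ≤ ⟪P (z n - w'), z n - w'⟫_ℝ := by
    intro w' hw' n
    set e : H := z n - w' with he
    set s : H := G (z n) - z n with hs
    have hz1 : z (n+1) - w' = e + lam n • s := by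
      rw [hupd n, he, hs]; module
    have hf := hfirm (z n) w'
    rw [hw'] at hf
    have hf2 : ⟪G (z n) - w', P s⟫_ℝ ≤ 0 := by
      have : P (G (z n) - z n) - P (w' - w') = P s := by
        rw [hs]; simp
      rw [← this]; exact hf
    have hGe : G (z n) - w' = e + s := by rw [he, hs]; abel
    rw [hGe, inner_add_left] at hf2
    set d : ℝ := ⟪P s, s⟫_ℝ with hd
    have hd0 : 0 ≤ d := hPpos s
    have hse : ⟪s, P s⟫_ℝ = d := real_inner_comm _ _
    have hesPs : ⟪e, P s⟫_ℝ + d ≤ 0 := by rw [← hse]; linarith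
    have hsym1 : ⟪P e, s⟫_ℝ = ⟪e, P s⟫_ℝ := hPsym e s
    have hsym2 : ⟪P s, e⟫_ℝ = ⟪e, P s⟫_ℝ := real_inner_comm _ _
    have hexp : ⟪P (e + lam n • s), e + lam n • s⟫_ℝ
        = ⟪P e, e⟫_ℝ + 2 * lam n * ⟪e, P s⟫_ℝ + (lam n)^2 * d := by
      rw [map_add, map_smul, inner_add_left, inner_add_right, inner_add_right,
        inner_smul_left, inner_smul_right, inner_smul_left, inner_smul_right]
      simp only [RCLike.conj_to_real, hd]
      rw [hsym1, hsym2]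
      ring
    rw [hz1, hexp]
    have hl1 := (hlam n).1
    have hl2 := (hlam n).2
    have h1 : 0 ≤ (lam n - ε) * (2 - ε - lam n) * d :=
      mul_nonneg (mul_nonneg (by linarith) (by linarith)) hd0
    have h2 : 0 ≤ ε * (1 - ε) * d :=
      mul_nonneg (mul_nonneg hε.le (by linarith)) hd0
    have h3 : 0 ≤ lam n * (-(⟪e, P s⟫_ℝ + d)) :=
      mul_nonneg (by linarith) (by linarith)
    nlinarith [h1, h2, h3]
  -- Fejér monotonicity w.r.t. the fixed point w
  set r : ℕ → ℝ := fun n => ⟪P (z n - w), z n - w⟫_ℝ with hrdef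
  have hr0 : ∀ n, 0 ≤ r n := fun n => hPpos _
  set d : ℕ → ℝ := fun n => ⟪P (G (z n) - z n), G (z n) - z n⟫_ℝ with hddef
  have hd0 : ∀ n, 0 ≤ d n := fun n => hPpos _
  have hrstep : ∀ n, r (n+1) + ε^2 * d n ≤ r n := hkey w hwfix
  have hrant : Antitone r := antitone_nat_of_succ_le fun n => by
    nlinarith [hrstep n, hd0 n, sq_nonneg ε]
  have hε2 : (0:ℝ) < ε^2 := by positivity
  have hdlim : Tendsto d atTop (𝓝 0) := by
    have hdiff := aux_antitone_lim r hrant hr0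
    have hup : Tendsto (fun n => (r n - r (n+1)) * (ε^2)⁻¹) atTop (𝓝 0) := by
      have := hdiff.mul_const ((ε^2)⁻¹)
      rwa [zero_mul] at this
    refine tendsto_of_tendsto_of_tendsto_of_le_of_le tendsto_const_nhds hup hd0 ?_
    intro n
    have h := hrstep n
    have h2 : d n ≤ (r n - r (n+1)) / ε^2 := (le_div_iff₀ hε2).mpr (by nlinarith)
    simpa [div_eq_mul_inv] using h2
  -- the Kᗮ-component of the residual tends to zero
  have hsquad : ∀ n, c * ‖Pi (G (z n) - z n)‖^2 ≤ d n := by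
    intro n
    calc c * ‖Pi (G (z n) - z n)‖^2 ≤ ⟪P (Pi (G (z n) - z n)), Pi (G (z n) - z n)⟫_ℝ :=
          hcb _ (hmem _)
      _ = d n := (hquad _).symm
  have hsProj : Tendsto (fun n => Pi (G (z n) - z n)) atTop (𝓝 0) := by
    apply aux_sq_to_zero _ (fun n => d n * c⁻¹)
    · have := hdlim.mul_const c⁻¹
      rwa [zero_mul] at this
    · intro n
      have h2 : ‖Pi (G (z n) - z n)‖^2 ≤ d n / c :=
        (le_div_iff₀ hcpos).mpr (by nlinarith [hsquad n])
      simpa [div_eq_mul_inv] using h2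
  -- boundedness of the Kᗮ-component
  set x : ℕ → H := fun n => Pi (z n) with hxdef
  have hGzx : ∀ n, G (z n) = G (x n) := fun n => hG_factor _ _ (hPx (z n)).symm
  have hxbound : ∀ n, ‖x n - Pi w‖ ≤ Real.sqrt (r 0 / c) := by
    intro n
    have h1 : c * ‖Pi (z n - w)‖^2 ≤ r n := by
      calc c * ‖Pi (z n - w)‖^2 ≤ ⟪P (Pi (z n - w)), Pi (z n - w)⟫_ℝ := hcb _ (hmem _)
        _ = r n := (hquad _).symm
    have h2 : ‖x n - Pi w‖^2 ≤ r 0 / c := by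
      have h3 : x n - Pi w = Pi (z n - w) := by rw [hxdef]; simp [map_sub]
      rw [h3, le_div_iff₀ hcpos, mul_comm]
      exact le_trans h1 (hrant (Nat.zero_le n))
    rw [← Real.sqrt_sq (norm_nonneg (x n - Pi w))]
    exact Real.sqrt_le_sqrt h2
  have hxmem : ∀ n, x n ∈ Metric.closedBall (Pi w) (Real.sqrt (r 0 / c)) := by
    intro n
    rw [Metric.mem_closedBall, dist_eq_norm]
    exact hxbound n
  obtain ⟨xstar, _, φ, hφ, hconv⟩ :=
    tendsto_subseq_of_bounded Metric.isBounded_closedBall hxmem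
  -- identify the limit point
  set zstar : H := G xstar with hzstardef
  have hGxconv : Tendsto (fun k => G (x (φ k))) atTop (𝓝 zstar) :=
    (hGcont.tendsto xstar).comp hconv
  have hPiGxconv : Tendsto (fun k => Pi (G (x (φ k)))) atTop (𝓝 (Pi zstar)) :=
    (Pi.continuous.tendsto zstar).comp hGxconv
  have hPiGxsub : Tendsto (fun k => Pi (G (x (φ k))) - x (φ k)) atTop (𝓝 0) := by
    have heq : ∀ n, Pi (G (z n) - z n) = Pi (G (x n)) - x n := by
      intro n
      rw [map_sub, ← hGzx n, hxdef]
    have := hsProj.comp hφ.tendsto_atTop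
    simpa [Function.comp_def, heq] using this
  have hPizstar : Pi zstar = xstar := by
    have h1 : Tendsto (fun k => Pi (G (x (φ k)))) atTop (𝓝 (0 + xstar)) := by
      have := hPiGxsub.add hconv
      simpa using this
    rw [zero_add] at h1
    exact tendsto_nhds_unique hPiGxconv h1
  have hPz : P zstar = P xstar := by
    rw [← hPx zstar, hPizstar]
  have hmemA : -M zstar ∈ A zstar := by
    have h := hGres xstar
    rw [← hzstardef] at h
    have heq : P xstar - P zstar - M zstar = -M zstar := by rw [hPz]; abel
    rwa [heq] at h
  have hzfix : G zstar = zstar := by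
    have hm : P zstar - P zstar - M zstar ∈ A zstar := by
      have : P zstar - P zstar - M zstar = -M zstar := by abel
      rw [this]; exact hmemA
    exact (hGuniq zstar zstar hm).symm
  -- full convergence of the Kᗮ-component
  set r' : ℕ → ℝ := fun n => ⟪P (z n - zstar), z n - zstar⟫_ℝ with hr'def
  have hr'0 : ∀ n, 0 ≤ r' n := fun n => hPpos _
  have hr'ant : Antitone r' := antitone_nat_of_succ_le fun n => by
    have := hkey zstar hzfix n
    nlinarith [hd0 n, sq_nonneg ε]
  have hr'eq : ∀ n, r' n = ⟪P (x n - xstar), x n - xstar⟫_ℝ := by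
    intro n
    have h3 : Pi (z n - zstar) = x n - xstar := by
      rw [map_sub, hPizstar, hxdef]
    rw [hr'def]
    calc ⟪P (z n - zstar), z n - zstar⟫_ℝ
        = ⟪P (Pi (z n - zstar)), Pi (z n - zstar)⟫_ℝ := hquad _
      _ = ⟪P (x n - xstar), x n - xstar⟫_ℝ := by rw [h3]
  have hr'sub : Tendsto (r' ∘ φ) atTop (𝓝 0) := by
    have hFcont : Continuous (fun v : H => ⟪P (v - xstar), v - xstar⟫_ℝ) :=
      (P.continuous.comp (continuous_id.sub continuous_const)).inner
        (continuous_id.sub continuous_const)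
    have h1 : Tendsto (fun k => ⟪P (x (φ k) - xstar), x (φ k) - xstar⟫_ℝ) atTop
        (𝓝 (⟪P (xstar - xstar), xstar - xstar⟫_ℝ)) :=
      (hFcont.tendsto xstar).comp hconv
    simp only [sub_self, map_zero, inner_zero_left] at h1
    have heq2 : (r' ∘ φ) = fun k => ⟪P (x (φ k) - xstar), x (φ k) - xstar⟫_ℝ := by
      funext k; exact hr'eq (φ k)
    rw [heq2]
    exact h1
  have hr'lim : Tendsto r' atTop (𝓝 0) := aux_antitone_sub r' hr'ant hr'0 φ hφ hr'sub
  have hxconv : Tendsto x atTop (𝓝 xstar) := by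
    rw [← tendsto_sub_nhds_zero_iff]
    apply aux_sq_to_zero _ (fun n => r' n * c⁻¹)
    · have := hr'lim.mul_const c⁻¹
      rwa [zero_mul] at this
    · intro n
      have h1 : c * ‖x n - xstar‖^2 ≤ r' n := by
        rw [hr'eq n]
        have h3 : x n - xstar = Pi (z n - zstar) := by rw [map_sub, hPizstar, hxdef]
        rw [h3]
        exact hcb _ (hmem _)
      have h2 : ‖x n - xstar‖^2 ≤ r' n / c := (le_div_iff₀ hcpos).mpr (by nlinarith)
      simpa [div_eq_mul_inv] using h2
  -- kernel component
  set y : ℕ → H := fun n => z n - x n with hydef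
  set k : ℕ → H := fun n => G (z n) - Pi (G (z n)) with hkdef
  set kstar : H := zstar - xstar with hkstardef
  have hGzconv : Tendsto (fun n => G (z n)) atTop (𝓝 zstar) := by
    have h1 : Tendsto (fun n => G (x n)) atTop (𝓝 zstar) := (hGcont.tendsto xstar).comp hxconv
    have heq : (fun n => G (z n)) = fun n => G (x n) := funext fun n => hGzx n
    rw [heq]; exact h1
  have hkconv : Tendsto k atTop (𝓝 kstar) := by
    have h2 : Tendsto (fun n => Pi (G (z n))) atTop (𝓝 (Pi zstar)) :=
      (Pi.continuous.tendsto zstar).comp hGzconv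
    rw [hPizstar] at h2
    have := hGzconv.sub h2
    exact this
  have hyrec : ∀ n, y (n+1) = y n + lam n • (k n - y n) := by
    intro n
    have hx1 : x (n+1) = x n + lam n • (Pi (G (z n)) - x n) := by
      rw [hxdef]
      show Pi (z (n+1)) = Pi (z n) + lam n • (Pi (G (z n)) - Pi (z n))
      rw [hupd n, map_add, map_smul, map_sub]
    rw [hydef]
    show z (n+1) - x (n+1) = (z n - x n) + lam n • (k n - (z n - x n))
    rw [hupd n, hx1, hkdef]
    module
  have hbrec : ∀ n, ‖y (n+1) - kstar‖ ≤ (1 - ε) * ‖y n - kstar‖ + 2 * ‖k n - kstar‖ := by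
    intro n
    have hsplit : y (n+1) - kstar = (1 - lam n) • (y n - kstar) + lam n • (k n - kstar) := by
      rw [hyrec n]
      module
    have hl1 := (hlam n).1
    have hl2 := (hlam n).2
    have habs : |1 - lam n| ≤ 1 - ε := abs_le.mpr ⟨by linarith, by linarith⟩
    have hlabs : |lam n| ≤ 2 := abs_le.mpr ⟨by linarith, by linarith⟩
    calc ‖y (n+1) - kstar‖ = ‖(1 - lam n) • (y n - kstar) + lam n • (k n - kstar)‖ := by
          rw [hsplit]
      _ ≤ ‖(1 - lam n) • (y n - kstar)‖ + ‖lam n • (k n - kstar)‖ := norm_add_le _ _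
      _ = |1 - lam n| * ‖y n - kstar‖ + |lam n| * ‖k n - kstar‖ := by
          rw [norm_smul, norm_smul, Real.norm_eq_abs, Real.norm_eq_abs]
      _ ≤ (1 - ε) * ‖y n - kstar‖ + 2 * ‖k n - kstar‖ := by
          have := norm_nonneg (y n - kstar)
          have := norm_nonneg (k n - kstar)
          gcongr
  have hknorm : Tendsto (fun n => 2 * ‖k n - kstar‖) atTop (𝓝 0) := by
    have h1 : Tendsto (fun n => ‖k n - kstar‖) atTop (𝓝 0) :=
      tendsto_iff_norm_sub_tendsto_zero.mp hkconv
    have := h1.const_mul 2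
    rwa [mul_zero] at this
  have hyconv : Tendsto y atTop (𝓝 kstar) := by
    rw [tendsto_iff_norm_sub_tendsto_zero]
    exact aux_contraction (fun n => ‖y n - kstar‖) (fun n => 2 * ‖k n - kstar‖) (1 - ε)
      (by linarith) (by linarith) (fun n => norm_nonneg _) hbrec hknorm
  have hzconv : Tendsto z atTop (𝓝 zstar) := by
    have h1 : Tendsto (fun n => x n + y n) atTop (𝓝 (xstar + kstar)) := hxconv.add hyconv
    have heq : (fun n => x n + y n) = z := by
      funext n; rw [hydef]; show x n + (z n - x n) = z n; abel
    have heq2 : xstar + kstar = zstar := by rw [hkstardef]; abel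
    rw [heq, heq2] at h1
    exact h1
  exact ⟨zstar, ⟨-M zstar, hmemA, by abel⟩, hzconv⟩
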